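/- For all reals β_m > 0, β_I > 0, γ_t > 0 and K_m ≥ 0, the outage probability with LoS (Rician with factor K_m) main link and NLoS (Rayleigh) interference link satisfies ∫₀^∞ (1 - Q(√(2·K_m), √(γ_t·β_I·g/β_m)))·exp(-g) dg = (γ_t·β_I/(2·β_m + γ_t·β_I))·exp( -2·K_m·β_m/(2·β_m + γ_t·β_I) ). -/

import Mathlib

open MeasureTheory Real Set

/-- Modified Bessel function of the first kind, order zero:
`I₀(x) = ∑ (x²/4)ⁿ / (n!)²`. -/
noncomputable def besselI0 (x : ℝ) : ℝ :=
  ∑' n : ℕ, (x ^ 2 / 4) ^ n / ((Nat.factorial n : ℝ)) ^ 2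

/-- First-order Marcum Q-function:
`Q(a,b) = ∫_b^∞ x · exp(-(x²+a²)/2) · I₀(a·x) dx`. -/
noncomputable def marcumQ (a b : ℝ) : ℝ :=
  ∫ x in Set.Ioi b, x * Real.exp (-(x ^ 2 + a ^ 2) / 2) * besselI0 (a * x)

/-- Normalized Rician fading density with Rician factor `K`. -/
noncomputable def ricianPDF (K h : ℝ) : ℝ :=
  (1 / 2) * Real.exp (-K - h / 2) * besselI0 (Real.sqrt (2 * K * h))


lemma besselI0_summable (y : ℝ) :
    Summable (fun n : ℕ => (y ^ 2 / 4) ^ n / ((Nat.factorial n : ℝ)) ^ 2) := by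
  have hfac : ∀ n : ℕ, (1 : ℝ) ≤ (Nat.factorial n : ℝ) := fun n =>
    Nat.one_le_cast.mpr (Nat.one_le_iff_ne_zero.mpr (Nat.factorial_ne_zero n))
  have hg : Summable (fun n : ℕ => (y ^ 2 / 4) ^ n / (Nat.factorial n : ℝ)) := by
    exact Real.summable_pow_div_factorial (y ^ 2 / 4)
  refine hg.of_nonneg_of_le (fun n => by positivity) (fun n => ?_)
  exact div_le_div_of_nonneg_left (by positivity) (by have := hfac n; positivity)
    (by nlinarith [hfac n])

lemma besselI0_nonneg (y : ℝ) : 0 ≤ besselI0 y :=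
  tsum_nonneg (fun n => by positivity)

lemma measurable_besselI0 : Measurable besselI0 := by
  apply measurable_of_tendsto_metrizable
    (f := fun N x => ∑ n ∈ Finset.range N, (x ^ 2 / 4) ^ n / ((Nat.factorial n : ℝ)) ^ 2)
  · intro N
    exact Finset.measurable_sum _ (fun n _ => by fun_prop)
  · rw [tendsto_pi_nhds]
    intro x
    exact (besselI0_summable x).hasSum.tendsto_sum_nat


lemma integral_pow_mul_exp_neg_mul_sq {p : ℝ} (hp : 0 < p) (n : ℕ) :
    ∫ x in Ioi (0:ℝ), x ^ (2*n+1) * Real.exp (-(p * x^2))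
      = (Nat.factorial n : ℝ) / (2 * p^(n+1)) := by
  have key := integral_comp_rpow_Ioi (fun t : ℝ => (1/2) * t^n * Real.exp (-(p * t)))
      (p := 2) (by norm_num)
  have h1 : ∫ x in Ioi (0:ℝ), x ^ (2*n+1) * Real.exp (-(p * x^2))
      = ∫ x in Ioi (0:ℝ), (|(2:ℝ)| * x ^ ((2:ℝ) - 1)) •
          ((1/2) * (x ^ (2:ℝ))^n * Real.exp (-(p * x ^ (2:ℝ)))) := by
    refine setIntegral_congr_fun measurableSet_Ioi (fun x hx => ?_)
    have hx0 : (0:ℝ) ≤ x := (mem_Ioi.mp hx).le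
    have habs : |(2:ℝ)| = 2 := abs_of_pos (by norm_num)
    have hr2 : ∀ y : ℝ, y ^ (2:ℝ) = y ^ (2:ℕ) := fun y => by
      rw [show ((2:ℝ)) = ((2:ℕ):ℝ) by norm_num, Real.rpow_natCast]
    rw [show ((2:ℝ) - 1) = 1 by norm_num, Real.rpow_one, hr2]
    simp only [smul_eq_mul, habs]
    ring
  have h2 : ∫ t in Ioi (0:ℝ), (1/2) * t^n * Real.exp (-(p * t))
      = (Nat.factorial n : ℝ) / (2 * p^(n+1)) := by
    rw [show (fun t : ℝ => (1/2) * t^n * Real.exp (-(p*t)))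
        = (fun t : ℝ => (1/2) * (t^n * Real.exp (-(p*t)))) by funext t; ring,
      integral_const_mul]
    have h3 : ∫ t in Ioi (0:ℝ), t^n * Real.exp (-(p * t))
        = (1/p) ^ ((n:ℝ)+1) * Real.Gamma ((n:ℝ)+1) := by
      rw [← integral_rpow_mul_exp_neg_mul_Ioi (by positivity : (0:ℝ) < (n:ℝ)+1) hp]
      refine setIntegral_congr_fun measurableSet_Ioi (fun t ht => ?_)
      rw [show ((n:ℝ)+1-1) = (n:ℝ) by ring, Real.rpow_natCast]
    rw [h3, Real.Gamma_nat_eq_factorial n,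
      show ((n:ℝ)+1) = ((n+1 : ℕ):ℝ) by push_cast; ring, Real.rpow_natCast]
    rw [div_pow, one_pow]
    field_simp
  rw [h1, key, h2]

lemma real_exp_tsum (y : ℝ) : Real.exp y = ∑' n : ℕ, y ^ n / (Nat.factorial n : ℝ) := by
  rw [Real.exp_eq_exp_ℝ, NormedSpace.exp_eq_tsum_div]

lemma besselI0_integral (a : ℝ) {p : ℝ} (hp : 0 < p) :
    IntegrableOn (fun x => x * Real.exp (-(p * x^2)) * besselI0 (a * x)) (Ioi 0) ∧
    ∫ x in Ioi (0:ℝ), x * Real.exp (-(p * x^2)) * besselI0 (a * x)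
      = (1/(2*p)) * Real.exp (a^2 / (4*p)) := by
  set f : ℝ → ℝ := fun x => x * Real.exp (-(p * x^2)) * besselI0 (a * x) with hf
  set F : ℕ → ℝ → ℝ := fun n x =>
    (a^2/4)^n / ((Nat.factorial n : ℝ))^2 * (x^(2*n+1) * Real.exp (-(p * x^2))) with hF
  set v : ℕ → ℝ := fun n => (a^2/(4*p))^n / (Nat.factorial n : ℝ) / (2*p) with hv
  have hpt : ∀ x : ℝ, f x = ∑' n, F n x := by
    intro x
    rw [hf]
    simp only [besselI0, ← tsum_mul_left]
    refine tsum_congr fun n => ?_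
    rw [hF]
    have : ((a*x)^2/4)^n = (a^2/4)^n * (x^2)^n := by
      rw [← mul_pow]; ring_nf
    simp only [this]
    rw [← pow_mul]
    field_simp
    ring
  have hFsummable : ∀ x : ℝ, Summable (fun n => F n x) := by
    intro x
    refine ((besselI0_summable (a*x)).mul_left (x * Real.exp (-(p * x^2)))).congr fun n => ?_
    rw [hF]
    have : ((a*x)^2/4)^n = (a^2/4)^n * (x^2)^n := by
      rw [← mul_pow]; ring_nf
    simp only [this]
    rw [← pow_mul]
    field_simp
    ring
  have hFint : ∀ n, IntegrableOn (F n) (Ioi 0) := by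
    intro n
    refine Integrable.const_mul ?_ _
    have h0 : IntegrableOn (fun x : ℝ => x ^ (((2*n+1 : ℕ):ℝ)) * Real.exp (-p * x^2)) (Ioi 0) :=
      integrableOn_rpow_mul_exp_neg_mul_sq hp ((by norm_num : (-1:ℝ) < 0).trans_le (by positivity))
    refine h0.congr_fun (fun x hx => ?_) measurableSet_Ioi
    beta_reduce
    rw [Real.rpow_natCast, neg_mul]
  have hFval : ∀ n, ∫ x in Ioi (0:ℝ), F n x = v n := by
    intro n
    rw [hF, hv]
    simp only []
    rw [integral_const_mul, integral_pow_mul_exp_neg_mul_sq hp n]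
    have h1 : (Nat.factorial n : ℝ) ≠ 0 := Nat.cast_ne_zero.mpr (Nat.factorial_ne_zero n)
    rw [div_pow]
    field_simp
    have hp' : p^n * p⁻¹^n = 1 := by rw [← mul_pow, mul_inv_cancel₀ hp.ne', one_pow]
    have h4 : (1/4:ℝ)^n * 4^n = 1 := by rw [← mul_pow]; norm_num
    linear_combination (-(a^(n*2)*p*((1/4:ℝ)^n*4^n))) * hp' - (a^(n*2)*p) * h4
  have hvsummable : Summable v := by
    refine Summable.div_const ?_ _
    exact Real.summable_pow_div_factorial _
  have hvnonneg : ∀ n, 0 ≤ v n := fun n => by rw [hv]; positivity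
  have hFnonneg : ∀ n, ∀ x ∈ Ioi (0:ℝ), 0 ≤ F n x := by
    intro n x hx
    have hx' : (0:ℝ) ≤ x := (mem_Ioi.mp hx).le
    rw [hF]
    positivity
  have hFmeas : ∀ n, AEStronglyMeasurable (F n) (volume.restrict (Ioi (0:ℝ))) := by
    intro n
    apply Measurable.aestronglyMeasurable
    fun_prop
  -- lintegral of each term
  have hFlint : ∀ n, ∫⁻ x in Ioi (0:ℝ), ‖F n x‖₊ = ENNReal.ofReal (v n) := by
    intro n
    rw [← hFval n, ofReal_integral_eq_lintegral_ofReal (hFint n)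
      ((ae_restrict_iff' measurableSet_Ioi).mpr (ae_of_all _ (hFnonneg n)))]
    refine lintegral_congr_ae ?_
    filter_upwards [self_mem_ae_restrict measurableSet_Ioi] with x hx
    rw [← Real.enorm_eq_ofReal (hFnonneg n x hx)]
    exact (enorm_eq_nnnorm _).symm
  have hsum_ne_top : ∑' n, ∫⁻ x in Ioi (0:ℝ), ‖F n x‖₊ ≠ ⊤ := by
    simp only [hFlint]
    rw [← ENNReal.ofReal_tsum_of_nonneg hvnonneg hvsummable]
    exact ENNReal.ofReal_ne_top
  have hswap : ∫ x in Ioi (0:ℝ), ∑' n, F n x = ∑' n, ∫ x in Ioi (0:ℝ), F n x :=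
    integral_tsum hFmeas hsum_ne_top
  have hint : IntegrableOn f (Ioi 0) := by
    constructor
    · apply Measurable.aestronglyMeasurable
      exact (measurable_id.mul (by fun_prop)).mul
        (measurable_besselI0.comp (measurable_const_mul a))
    · rw [hasFiniteIntegral_iff_norm]
      have : ∫⁻ x in Ioi (0:ℝ), ENNReal.ofReal ‖f x‖
          = ∫⁻ x in Ioi (0:ℝ), ∑' n, ENNReal.ofReal (F n x) := by
        refine lintegral_congr_ae ?_
        filter_upwards [self_mem_ae_restrict measurableSet_Ioi] with x hx
        rw [Real.norm_of_nonneg, hpt x, ENNReal.ofReal_tsum_of_nonneg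
          (fun n => hFnonneg n x hx) (hFsummable x)]
        · rw [hpt x]
          exact tsum_nonneg (fun n => hFnonneg n x hx)
      rw [this, lintegral_tsum (fun n => ((hFmeas n).aemeasurable).ennreal_ofReal)]
      have h2 : ∀ n, ∫⁻ x in Ioi (0:ℝ), ENNReal.ofReal (F n x)
          = ENNReal.ofReal (v n) := by
        intro n
        rw [← hFlint n]
        refine lintegral_congr_ae ?_
        filter_upwards [self_mem_ae_restrict measurableSet_Ioi] with x hx
        rw [← Real.enorm_eq_ofReal (hFnonneg n x hx)]
        exact enorm_eq_nnnorm _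
      simp only [h2]
      rw [← ENNReal.ofReal_tsum_of_nonneg hvnonneg hvsummable]
      exact ENNReal.ofReal_lt_top
  refine ⟨hint, ?_⟩
  calc ∫ x in Ioi (0:ℝ), f x = ∫ x in Ioi (0:ℝ), ∑' n, F n x := by
        refine integral_congr_ae (ae_of_all _ (fun x => hpt x))
    _ = ∑' n, ∫ x in Ioi (0:ℝ), F n x := hswap
    _ = ∑' n, v n := by simp only [hFval]
    _ = (1/(2*p)) * Real.exp (a^2/(4*p)) := by
        rw [hv]
        simp only []
        rw [tsum_div_const, real_exp_tsum (a^2/(4*p))]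
        ring

theorem stmt_7 (βm βI γt Km : ℝ) (hβm : 0 < βm) (hβI : 0 < βI) (hγt : 0 < γt)
    (hKm : 0 ≤ Km) :
    ∫ g in Set.Ioi (0 : ℝ),
        (1 - marcumQ (Real.sqrt (2 * Km)) (Real.sqrt (γt * βI * g / βm))) * Real.exp (-g) =
      (γt * βI / (2 * βm + γt * βI)) *
        Real.exp (-(2 * Km * βm) / (2 * βm + γt * βI)) := by
  set a : ℝ := Real.sqrt (2 * Km) with ha
  have ha2 : a ^ 2 = 2 * Km := Real.sq_sqrt (by positivity)
  set c : ℝ := γt * βI / βm with hc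
  have hc0 : 0 < c := by positivity
  set f : ℝ → ℝ := fun x => x * Real.exp (-(x ^ 2 + a ^ 2) / 2) * besselI0 (a * x) with hfdef
  -- rewrite f with separated exponential
  have hfeq : ∀ q : ℝ, 0 < q → ∀ x : ℝ,
      x * Real.exp (-((1/2 + q) * x^2)) * besselI0 (a * x)
        = Real.exp (a^2/2) * (f x * Real.exp (-(x^2 * q))) := by
    intro q hq x
    rw [hfdef]
    have : Real.exp (-((1/2 + q) * x^2)) =
        Real.exp (a^2/2) * (Real.exp (-(x^2 + a^2)/2) * Real.exp (-(x^2 * q))) := by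
      rw [← Real.exp_add, ← Real.exp_add]; congr 1; ring
    rw [this]; ring
  -- integrability of f on Ioi 0 and total mass 1
  have hniceP : ∀ q : ℝ, 0 < q → IntegrableOn (fun x => f x * Real.exp (-(x^2 * q))) (Ioi 0) ∧
      ∫ x in Ioi (0:ℝ), f x * Real.exp (-(x^2 * q))
        = Real.exp (-(a^2/2)) * ((1/(2*(1/2+q))) * Real.exp (a^2/(4*(1/2+q)))) := by
    intro q hq
    have h12q : (0:ℝ) < 1/2 + q := by linarith
    obtain ⟨hI, hV⟩ := besselI0_integral a h12q
    have hcongr : EqOn (fun x => Real.exp (-(a^2/2)) *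
        (x * Real.exp (-((1/2+q) * x^2)) * besselI0 (a * x)))
        (fun x => f x * Real.exp (-(x^2 * q))) (Ioi 0) := by
      intro x _
      simp only []
      rw [hfeq q hq x, ← mul_assoc, ← Real.exp_add]
      simp
    constructor
    · exact IntegrableOn.congr_fun (hI.const_mul (Real.exp (-(a^2/2)))) hcongr measurableSet_Ioi
    · rw [← setIntegral_congr_fun measurableSet_Ioi hcongr, integral_const_mul, hV]
  -- integrability of f on Ioi 0 and unit mass
  have hfsplit : EqOn (fun x => Real.exp (-(a^2/2)) *
      (x * Real.exp (-((1/2:ℝ) * x^2)) * besselI0 (a * x))) f (Ioi 0) := by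
    intro x _
    simp only [hfdef]
    have : Real.exp (-(x^2 + a^2)/2) = Real.exp (-(a^2/2)) * Real.exp (-((1/2:ℝ) * x^2)) := by
      rw [← Real.exp_add]; congr 1; ring
    rw [this]; ring
  obtain ⟨hI2, hV2⟩ := besselI0_integral a (by norm_num : (0:ℝ) < 1/2)
  have hint0 : IntegrableOn f (Ioi 0) :=
    IntegrableOn.congr_fun (hI2.const_mul (Real.exp (-(a^2/2)))) hfsplit measurableSet_Ioi
  have hone : ∫ x in Ioi (0:ℝ), f x = 1 := by
    rw [← setIntegral_congr_fun measurableSet_Ioi hfsplit, integral_const_mul, hV2]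
    norm_num
    rw [← Real.exp_add]
    norm_num
  have hQ : ∀ b : ℝ, 0 ≤ b → 1 - marcumQ a b = ∫ x in Ioc (0:ℝ) b, f x := by
    intro b hb
    have hsplit : ∫ x in Ioi (0:ℝ), f x
        = (∫ x in Ioc (0:ℝ) b, f x) + ∫ x in Ioi b, f x := by
      rw [← setIntegral_union (Ioc_disjoint_Ioi le_rfl) measurableSet_Ioi
        (hint0.mono_set Ioc_subset_Ioi_self) (hint0.mono_set (Ioi_subset_Ioi hb)),
        Ioc_union_Ioi_eq_Ioi hb]
    have hQb : marcumQ a b = ∫ x in Ioi b, f x := rfl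
    rw [hQb]; rw [hone] at hsplit; linarith
  -- Fubini setup
  set μ : Measure ℝ := volume.restrict (Ioi 0) with hμ
  set H : ℝ → ℝ → ℝ := fun g x =>
    Set.indicator {p : ℝ | p^2 ≤ c*g} (fun x => Real.exp (-g) * f x) x with hH
  have hexp : Integrable (fun g : ℝ => Real.exp (-g)) μ := by
    have := exp_neg_integrableOn_Ioi (0:ℝ) one_pos
    have h2 : IntegrableOn (fun x : ℝ => Real.exp (-x)) (Ioi 0) := by simpa using this
    exact h2
  have hSmeas : MeasurableSet {q : ℝ×ℝ | q.2^2 ≤ c*q.1} :=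
    measurableSet_le (by fun_prop) (by fun_prop)
  have hfmeas : Measurable f := by
    apply Measurable.mul
    · fun_prop
    · exact measurable_besselI0.comp (measurable_const_mul a)
  have hGint : Integrable (fun q : ℝ×ℝ => Real.exp (-q.1) * f q.2) (μ.prod μ) :=
    Integrable.mul_prod hexp hint0
  have hHunc : Function.uncurry H
      = Set.indicator {q : ℝ×ℝ | q.2^2 ≤ c*q.1} (fun q => Real.exp (-q.1) * f q.2) := by
    funext q
    simp only [Function.uncurry, hH, Set.indicator_apply, mem_setOf_eq]
  have hHint : Integrable (Function.uncurry H) (μ.prod μ) := by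
    rw [hHunc]
    exact hGint.indicator hSmeas
  have hswap : ∫ g, (∫ x, H g x ∂μ) ∂μ = ∫ x, (∫ g, H g x ∂μ) ∂μ :=
    integral_integral_swap hHint
  -- identify left side
  have hleft : ∀ g ∈ Ioi (0:ℝ), ∫ x, H g x ∂μ
      = (1 - marcumQ a (Real.sqrt (c*g))) * Real.exp (-g) := by
    intro g hg
    have hg0 : (0:ℝ) < g := hg
    have hs : MeasurableSet {p : ℝ | p^2 ≤ c*g} := measurableSet_le (by fun_prop) (by fun_prop)
    rw [hH]
    rw [integral_indicator hs, hμ, Measure.restrict_restrict hs]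
    have hseteq : {p : ℝ | p^2 ≤ c*g} ∩ Ioi 0 = Ioc 0 (Real.sqrt (c*g)) := by
      ext x
      simp only [mem_inter_iff, mem_setOf_eq, mem_Ioi, mem_Ioc]
      constructor
      · rintro ⟨h1, h2⟩; exact ⟨h2, (Real.le_sqrt' h2).mpr h1⟩
      · rintro ⟨h1, h2⟩; exact ⟨(Real.le_sqrt' h1).mp h2, h1⟩
    rw [hseteq, integral_const_mul, hQ _ (Real.sqrt_nonneg _)]
    ring
  -- identify right side
  have hright : ∀ x ∈ Ioi (0:ℝ), ∫ g, H g x ∂μ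
      = f x * Real.exp (-(x^2 * (1/c))) := by
    intro x hx
    have hx0 : (0:ℝ) < x := hx
    have hfun : (fun g => H g x)
        = Set.indicator (Ici (x^2/c)) (fun g => Real.exp (-g) * f x) := by
      funext g
      simp only [hH, Set.indicator_apply, mem_setOf_eq, mem_Ici]
      have : x^2 ≤ c*g ↔ x^2/c ≤ g := by
        rw [div_le_iff₀ hc0, mul_comm]
      by_cases hcase : x^2 ≤ c*g
      · rw [if_pos hcase, if_pos (this.mp hcase)]
      · rw [if_neg hcase, if_neg (fun h => hcase (this.mpr h))]
    rw [hfun, integral_indicator measurableSet_Ici, hμ,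
      Measure.restrict_restrict measurableSet_Ici]
    have hsub : Ici (x^2/c) ∩ Ioi 0 = Ici (x^2/c) :=
      inter_eq_self_of_subset_left (fun y hy =>
        lt_of_lt_of_le (by positivity) (mem_Ici.mp hy))
    rw [hsub, integral_mul_const, integral_Ici_eq_integral_Ioi, integral_exp_neg_Ioi]
    rw [show -(x^2/c) = -(x^2 * (1/c)) by ring]
    ring
  -- assemble
  have hLHS : ∫ g in Set.Ioi (0:ℝ),
      (1 - marcumQ a (Real.sqrt (γt * βI * g / βm))) * Real.exp (-g)
      = ∫ g, (∫ x, H g x ∂μ) ∂μ := by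
    refine (setIntegral_congr_fun measurableSet_Ioi (fun g hg => ?_)).symm
    rw [hleft g hg, show c * g = γt * βI * g / βm by rw [hc]; ring]
  rw [hLHS, hswap]
  have hRHS : ∫ x, (∫ g, H g x ∂μ) ∂μ = ∫ x in Ioi (0:ℝ), f x * Real.exp (-(x^2 * (1/c))) :=
    setIntegral_congr_fun measurableSet_Ioi (fun x hx => hright x hx)
  rw [hRHS, (hniceP (1/c) (by positivity)).2]
  -- final arithmetic
  have hD : (0:ℝ) < 2*βm + γt*βI := by positivity
  rw [ha2, ← mul_assoc, mul_comm (Real.exp _) _, mul_assoc, ← Real.exp_add]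
  congr 1
  · rw [hc]
    field_simp
    ring
  · congr 1
    rw [hc]
    field_simp
    ring
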